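/- Let G be a countable group and H a subgroup with the spectral gap property. Then H is the only point of G/H with finite H-orbit; in particular, H is self-commensurating (Comm_G(H) = H). -/

import Mathlib

open scoped Classical ENNReal
open Topology Filter

noncomputable section

namespace QR

/-- The evaluation of a unitary representation on an element of the group algebra `ℂ[G]`. -/
def repAlg {G : Type*} [Group G] {E : Type*} [NormedAddCommGroup E] [NormedSpace ℂ E]
    (π : G →* (E →L[ℂ] E)) (f : MonoidAlgebra ℂ G) : E →L[ℂ] E :=
  MonoidAlgebra.lift ℂ (E →L[ℂ] E) G π f

/-- Weak containment `ρ ≺ π` of representations: `‖ρ(f)‖ ≤ ‖π(f)‖` for every element `f` of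
the group algebra `ℂ[G]`. -/
def WeaklyContained {G : Type*} [Group G] {E F : Type*}
    [NormedAddCommGroup E] [NormedSpace ℂ E] [NormedAddCommGroup F] [NormedSpace ℂ F]
    (ρ : G →* (E →L[ℂ] E)) (π : G →* (F →L[ℂ] F)) : Prop :=
  ∀ f : MonoidAlgebra ℂ G, ‖repAlg ρ f‖ ≤ ‖repAlg π f‖

/-- The trivial (one-dimensional) representation `1_G`. -/
def trivialRep (G : Type*) [Group G] : G →* (ℂ →L[ℂ] ℂ) := 1

section lp

variable {X K : Type*} [NormedAddCommGroup K] [InnerProductSpace ℂ K]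

lemma memTwist (e : X ≃ X) (U : X → (K ≃ₗᵢ[ℂ] K)) (F : lp (fun _ : X => K) 2) :
    Memℓp (fun x => U x (F (e.symm x))) 2 := by
  apply memℓp_gen
  have hs : Summable fun x : X => ‖F x‖ ^ (2 : ℝ≥0∞).toReal :=
    (lp.memℓp F).summable (by norm_num)
  have : Summable fun x : X => ‖F (e.symm x)‖ ^ (2 : ℝ≥0∞).toReal :=
    (e.symm.summable_iff (f := fun x : X => ‖F x‖ ^ (2 : ℝ≥0∞).toReal)).2 hs
  simpa [LinearIsometryEquiv.norm_map] using this

/-- The twisted translation operator on `ℓ²(X, K)`. -/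
def twistOp (e : X ≃ X) (U : X → (K ≃ₗᵢ[ℂ] K)) :
    lp (fun _ : X => K) 2 →L[ℂ] lp (fun _ : X => K) 2 :=
  LinearMap.mkContinuous
    { toFun := fun F => ⟨fun x => U x (F (e.symm x)), memTwist e U F⟩
      map_add' := by
        intro F G'
        apply lp.ext
        funext x
        simp [lp.coeFn_add, Pi.add_apply]
        rfl
      map_smul' := by
        intro c F
        apply lp.ext
        funext x
        simp [lp.coeFn_smul, Pi.smul_apply] }
    1
    (by
      intro F
      have h2 : (0:ℝ) < (2 : ℝ≥0∞).toReal := by norm_num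
      rw [one_mul]
      apply le_of_eq
      rw [lp.norm_eq_tsum_rpow h2, lp.norm_eq_tsum_rpow h2]
      congr 1
      have := (e.symm).tsum_eq (f := fun x : X => ‖F x‖ ^ (2 : ℝ≥0∞).toReal)
      simpa [LinearIsometryEquiv.norm_map] using this)

@[simp] lemma twistOp_apply (e : X ≃ X) (U : X → (K ≃ₗᵢ[ℂ] K))
    (F : lp (fun _ : X => K) 2) (x : X) :
    (twistOp e U F : ∀ _ : X, K) x = U x (F (e.symm x)) := rfl

end lp

/-- The permutation (unitary) representation of `Γ` on `ℓ²(X)` attached to an action of `Γ`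
on the set `X`, given by `(π(g)F)(x) = F(g⁻¹ • x)`. -/
def permRep (Γ X : Type*) [Group Γ] [MulAction Γ X] :
    Γ →* (lp (fun _ : X => ℂ) 2 →L[ℂ] lp (fun _ : X => ℂ) 2) where
  toFun g := twistOp (MulAction.toPerm g) (fun _ => LinearIsometryEquiv.refl ℂ ℂ)
  map_one' := by
    apply ContinuousLinearMap.ext
    intro F
    apply lp.ext
    funext x
    simp
  map_mul' := by
    intro g g'
    apply ContinuousLinearMap.ext
    intro F
    apply lp.ext
    funext x
    simp [mul_smul]

/-- The left regular representation `λ_G` of `G` on `ℓ²(G)`. -/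
def regularRep (G : Type*) [Group G] :
    G →* (lp (fun _ : G => ℂ) 2 →L[ℂ] lp (fun _ : G => ℂ) 2) :=
  permRep G G

/-- The quasi-regular representation `λ_{G/H}` of `G` on `ℓ²(G/H)`. -/
def quasiRegRep (G : Type*) [Group G] (H : Subgroup G) :
    G →* (lp (fun _ : G ⧸ H => ℂ) 2 →L[ℂ] lp (fun _ : G ⧸ H => ℂ) 2) :=
  permRep G (G ⧸ H)

section SpectralGap

variable {G : Type*} [Group G]

lemma base_fixed {H : Subgroup G} (h : H) :
    (h : G) • ((1 : G) : G ⧸ H) = ((1 : G) : G ⧸ H) := by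
  rw [MulAction.Quotient.smul_mk, smul_eq_mul, mul_one]
  exact QuotientGroup.eq.mpr (by simp [H.inv_mem h.2])

/-- The action of `H` on `G/H ∖ {H}`. -/
instance sgAction (G : Type*) [Group G] (H : Subgroup G) :
    MulAction H {q : G ⧸ H // q ≠ ((1 : G) : G ⧸ H)} where
  smul h q := ⟨(h : G) • q.1, fun hEq => q.2 (by
    calc q.1 = (h : G)⁻¹ • ((h : G) • q.1) := (inv_smul_smul _ _).symm
      _ = ((h⁻¹ : H) : G) • (((1 : G) : G ⧸ H)) := by rw [hEq]; rfl
      _ = ((1 : G) : G ⧸ H) := base_fixed _)⟩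
  one_smul q := by
    apply Subtype.ext
    show ((1 : H) : G) • q.1 = q.1
    simp
  mul_smul h h' q := by
    apply Subtype.ext
    show ((h * h' : H) : G) • q.1 = (h : G) • ((h' : G) • q.1)
    rw [MulMemClass.coe_mul, mul_smul]

/-- The natural representation of `H` on `ℓ²(G/H ∖ {H})`. -/
def sgRep (G : Type*) [Group G] (H : Subgroup G) :
    H →* (lp (fun _ : {q : G ⧸ H // q ≠ ((1 : G) : G ⧸ H)} => ℂ) 2 →L[ℂ]
      lp (fun _ : {q : G ⧸ H // q ≠ ((1 : G) : G ⧸ H)} => ℂ) 2) :=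
  permRep H {q : G ⧸ H // q ≠ ((1 : G) : G ⧸ H)}

/-- `H ≤ G` has the spectral gap property if `1_H` is not weakly contained in the natural
representation of `H` on `ℓ²(G/H ∖ {H})`. -/
def HasSpectralGap (G : Type*) [Group G] (H : Subgroup G) : Prop :=
  ¬ WeaklyContained (trivialRep H) (sgRep G H)

end SpectralGap

open scoped Pointwise

section AuxProof

lemma norm_repAlg_trivial {Γ : Type*} [Group Γ] (f : MonoidAlgebra ℂ Γ) :
    ‖repAlg (trivialRep Γ) f‖ = ‖f.coeff.sum fun _ c => c‖ := by
  have h : repAlg (trivialRep Γ) f = algebraMap ℂ (ℂ →L[ℂ] ℂ) (f.coeff.sum fun _ c => c) := by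
    rw [repAlg, MonoidAlgebra.lift_apply']
    simp only [Finsupp.sum, trivialRep, MonoidHom.one_apply, mul_one]
    rw [map_sum]
  rw [h, norm_algebraMap']

lemma weaklyContained_trivial_of_invariant {Γ : Type*} [Group Γ] {F : Type*}
    [NormedAddCommGroup F] [NormedSpace ℂ F]
    (π : Γ →* (F →L[ℂ] F)) (v : F) (hv : v ≠ 0) (hπ : ∀ g : Γ, π g v = v) :
    WeaklyContained (trivialRep Γ) π := by
  intro f
  rw [norm_repAlg_trivial]
  have happ : repAlg π f v = (f.coeff.sum fun _ c => c) • v := by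
    rw [repAlg, MonoidAlgebra.lift_apply, Finsupp.sum, Finsupp.sum]
    rw [ContinuousLinearMap.sum_apply, Finset.sum_smul]
    simp [hπ]
  have h1 : ‖f.coeff.sum fun _ c => c‖ * ‖v‖ = ‖repAlg π f v‖ := by
    rw [happ, norm_smul]
  have h2 : ‖repAlg π f v‖ ≤ ‖repAlg π f‖ * ‖v‖ := (repAlg π f).le_opNorm v
  have hv' : 0 < ‖v‖ := norm_pos_iff.mpr hv
  exact le_of_mul_le_mul_right (h1 ▸ h2) hv'

variable {G : Type*} [Group G]

lemma exists_invariant_vector {H : Subgroup G}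
    {q : G ⧸ H} (hq : q ≠ ((1 : G) : G ⧸ H))
    (hfin : (Set.range fun h : H => (h : G) • q).Finite) :
    ∃ v : lp (fun _ : {x : G ⧸ H // x ≠ ((1 : G) : G ⧸ H)} => ℂ) 2,
      v ≠ 0 ∧ ∀ h : H, sgRep G H h v = v := by
  set O : Set (G ⧸ H) := Set.range fun h : H => (h : G) • q with hO
  set X := {x : G ⧸ H // x ≠ ((1 : G) : G ⧸ H)}
  set φ : X → ℂ := fun x => if x.1 ∈ O then 1 else 0 with hφ
  have hSfin : (Subtype.val ⁻¹' O : Set X).Finite :=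
    hfin.preimage (Set.injOn_of_injective Subtype.val_injective)
  have hmem : Memℓp φ 2 := by
    apply memℓp_gen
    apply summable_of_ne_finset_zero (s := hSfin.toFinset)
    intro x hx
    have : φ x = 0 := by
      simp only [hφ]
      rw [if_neg]
      intro hxO
      exact hx (hSfin.mem_toFinset.mpr hxO)
    rw [this, norm_zero]
    rw [Real.zero_rpow (by norm_num)]
  refine ⟨⟨φ, hmem⟩, ?_, ?_⟩
  · intro h0
    have hq1 : φ ⟨q, hq⟩ = 1 := if_pos ⟨1, one_smul _ _⟩
    have hz : φ ⟨q, hq⟩ = 0 := by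
      have := congrArg (fun F : lp (fun _ : X => ℂ) 2 => (F : ∀ _ : X, ℂ) ⟨q, hq⟩) h0
      simpa using this
    rw [hq1] at hz
    exact one_ne_zero hz
  · intro h
    apply lp.ext
    funext x
    have hcalc : ((sgRep G H h ⟨φ, hmem⟩ : lp (fun _ : X => ℂ) 2) : ∀ _ : X, ℂ) x
        = φ ((MulAction.toPerm h).symm x) := rfl
    rw [hcalc]
    have : (MulAction.toPerm h).symm x = h⁻¹ • x := rfl
    rw [this]
    show (if ((h⁻¹ • x : X)).1 ∈ O then (1 : ℂ) else 0) = if x.1 ∈ O then 1 else 0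
    have hx1 : ((h⁻¹ • x : X)).1 = ((h⁻¹ : H) : G) • x.1 := rfl
    have hiff : ((h⁻¹ : H) : G) • x.1 ∈ O ↔ x.1 ∈ O := by
      constructor
      · rintro ⟨k, hk⟩
        have hk' : (k : G) • q = ((h⁻¹ : H) : G) • x.1 := hk
        refine ⟨h * k, ?_⟩
        show (((h * k : H) : G)) • q = x.1
        calc (((h * k : H) : G)) • q = (h : G) • ((k : G) • q) := by
              rw [MulMemClass.coe_mul, mul_smul]
          _ = (h : G) • (((h⁻¹ : H) : G) • x.1) := by rw [hk']
          _ = (((h * h⁻¹ : H) : G)) • x.1 := by rw [MulMemClass.coe_mul, mul_smul]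
          _ = x.1 := by simp
      · rintro ⟨k, hk⟩
        have hk' : (k : G) • q = x.1 := hk
        refine ⟨h⁻¹ * k, ?_⟩
        show (((h⁻¹ * k : H) : G)) • q = ((h⁻¹ : H) : G) • x.1
        rw [MulMemClass.coe_mul, mul_smul, hk']
    rw [hx1]
    by_cases hc : x.1 ∈ O
    · rw [if_pos (hiff.mpr hc), if_pos hc]
    · rw [if_neg (fun hmem' => hc (hiff.mp hmem')), if_neg hc]

end AuxProof

/-- If `H ≤ G` has the spectral gap property, then the coset `H` is the only
point of `G/H` with finite `H`-orbit; in particular `H` is self-commensurating: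
`Comm_G(H) = H`. -/
theorem spectral_gap_implies_self_commensurating (G : Type*) [Group G] [Countable G]
    (H : Subgroup G) (hsg : HasSpectralGap G H) :
    (∀ q : G ⧸ H, (Set.range fun h : H => (h : G) • q).Finite → q = ((1 : G) : G ⧸ H)) ∧
    Subgroup.Commensurable.commensurator H = H := by
  have key : ∀ q : G ⧸ H, (Set.range fun h : H => (h : G) • q).Finite →
      q = ((1 : G) : G ⧸ H) := by
    intro q hfin
    by_contra hq
    obtain ⟨v, hv, hinv⟩ := exists_invariant_vector hq hfin
    exact hsg (weaklyContained_trivial_of_invariant _ v hv hinv)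
  refine ⟨key, le_antisymm ?_ ?_⟩
  · intro g hg
    rw [Subgroup.Commensurable.commensurator_mem_iff] at hg
    have hrel : (ConjAct.toConjAct g • H).relIndex H ≠ 0 := hg.1
    have hstab : MulAction.stabilizer H ((g : G) : G ⧸ H)
        = (ConjAct.toConjAct g • H).subgroupOf H := by
      ext h
      simp only [MulAction.mem_stabilizer_iff, Subgroup.mem_subgroupOf,
        Subgroup.mem_pointwise_smul_iff_inv_smul_mem, ← map_inv, ConjAct.toConjAct_smul]
      constructor
      · intro hsm
        have h1 : ((h : G) * g : G ⧸ H) = (g : G ⧸ H) := by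
          rw [← hsm]
          show _ = (h : G) • ((g : G) : G ⧸ H)
          rw [MulAction.Quotient.smul_mk, smul_eq_mul]
        have h2 : ((h : G) * g)⁻¹ * g ∈ H := QuotientGroup.eq.mp h1
        have h3 : g⁻¹ * (h : G)⁻¹ * g ∈ H := by
          simpa [mul_inv_rev, mul_assoc] using h2
        have := H.inv_mem h3
        simpa [mul_inv_rev, mul_assoc] using this
      · intro hsm
        have h3 : g⁻¹ * (h : G)⁻¹ * g ∈ H := by
          have := H.inv_mem hsm
          simpa [mul_inv_rev, mul_assoc] using this
        show (h : G) • ((g : G) : G ⧸ H) = _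
        rw [MulAction.Quotient.smul_mk, smul_eq_mul]
        refine QuotientGroup.eq.mpr ?_
        simpa [mul_inv_rev, mul_assoc] using h3
    have hfinquot : Finite (H ⧸ MulAction.stabilizer H ((g : G) : G ⧸ H)) := by
      rw [hstab]
      exact Nat.finite_of_card_ne_zero hrel
    have horb : (Set.range fun h : H => (h : G) • ((g : G) : G ⧸ H)).Finite := by
      have : Finite (MulAction.orbit H ((g : G) : G ⧸ H)) :=
        Finite.of_equiv _ (MulAction.orbitEquivQuotientStabilizer H _).symm
      have hfin : (MulAction.orbit H ((g : G) : G ⧸ H)).Finite := Set.toFinite _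
      exact hfin
    have := key _ horb
    have hmem : g⁻¹ * 1 ∈ H := QuotientGroup.eq.mp this
    simpa using H.inv_mem (by simpa using hmem)
  · intro g hg
    rw [Subgroup.Commensurable.commensurator_mem_iff]
    have : ConjAct.toConjAct g • H = H := by
      ext x
      rw [Subgroup.mem_pointwise_smul_iff_inv_smul_mem, ← map_inv, ConjAct.toConjAct_smul]
      constructor
      · intro hx
        have : g * (g⁻¹ * x * g⁻¹⁻¹) * g⁻¹ ∈ H :=
          H.mul_mem (H.mul_mem hg hx) (H.inv_mem hg)
        simpa [mul_assoc] using this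
      · intro hx
        exact H.mul_mem (H.mul_mem (H.inv_mem hg) hx) (by simpa using hg)
    rw [this]

end QR
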